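/- arXiv:2003.01315 — 2 statements merged into one kernel-verified Lean document; each statement's English description precedes it below -/
import Mathlib

section
/- Let $\lambda : [0, R) \to \mathbb{R}$ be a locally Lipschitz function, differentiable almost everywhere, satisfying $\lambda'(s) + \lambda(s)^2 \le -1$ at every point of differentiability. Then for all $s \in [0,R)$ with $1 + \lambda(0)\tan s > 0$, we have $\lambda(s) \le \frac{\lambda(0) - \tan s}{1 + \lambda(0)\tan s}$. In particular $R \le \frac{\pi}{2} + \arctan \lambda(0)$. -/
open Real MeasureTheory Set NNReal Filter Topology

section helpers

lemma locLip_compact {f : ℝ → ℝ} (hf : LocallyLipschitz f) {s : Set ℝ}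
    (hs : IsCompact s) : ∃ K : ℝ≥0, LipschitzOnWith K f s := by
  have h : ∀ x : ℝ, ∃ K : ℝ≥0, ∃ r > 0, LipschitzOnWith K f (Metric.ball x r) := by
    intro x
    obtain ⟨K, t, ht, hK⟩ := hf x
    obtain ⟨r, hr, hball⟩ := Metric.mem_nhds_iff.1 ht
    exact ⟨K, r, hr, hK.mono hball⟩
  choose K r hr hK using h
  have hcov : s ⊆ ⋃ x ∈ s, Metric.ball x (r x / 2) := by
    intro x hx
    exact Set.mem_biUnion hx (Metric.mem_ball_self (by linarith [hr x]))
  obtain ⟨I, hIs, hIfin, hIcov⟩ :=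
    hs.elim_finite_subcover_image (fun x _ => Metric.isOpen_ball) hcov
  obtain ⟨M, hM⟩ := hs.exists_bound_of_continuousOn hf.continuous.continuousOn
  rcases Set.eq_empty_or_nonempty s with hse | hne
  · exact ⟨1, by simp [hse]⟩
  have hM0 : 0 ≤ M := le_trans (norm_nonneg _) (hM hne.choose hne.choose_spec)
  set J := hIfin.toFinset with hJ
  have hJne : J.Nonempty := by
    obtain ⟨x, hx⟩ := hne
    have := hIcov hx
    simp only [Set.mem_iUnion] at this
    obtain ⟨i, hi, _⟩ := this
    exact ⟨i, hIfin.mem_toFinset.2 hi⟩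
  set δ : ℝ := J.inf' hJne (fun x => r x / 2) with hδdef
  have hδpos : 0 < δ := by
    rw [Finset.lt_inf'_iff]
    intro i _
    linarith [hr i]
  set Km : ℝ := J.sup' hJne (fun x => (K x : ℝ)) with hKm
  have hKm0 : 0 ≤ Km := le_trans (K hJne.choose).coe_nonneg (Finset.le_sup' (fun x => (K x : ℝ)) hJne.choose_spec)
  set C : ℝ := max Km (2 * M / δ) with hC
  have hC0 : 0 ≤ C := le_trans hKm0 (le_max_left _ _)
  refine ⟨C.toNNReal, lipschitzOnWith_iff_dist_le_mul.2 fun x hx y hy => ?_⟩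
  rw [Real.coe_toNNReal _ hC0]
  rcases lt_or_ge (dist x y) δ with hd | hd
  · have := hIcov hx
    simp only [Set.mem_iUnion] at this
    obtain ⟨i, hi, hxi⟩ := this
    have hiJ : i ∈ J := hIfin.mem_toFinset.2 hi
    have hδi : δ ≤ r i / 2 := Finset.inf'_le _ hiJ
    have hxball : x ∈ Metric.ball i (r i) := by
      rw [Metric.mem_ball] at hxi ⊢; linarith [hr i]
    have hyball : y ∈ Metric.ball i (r i) := by
      rw [Metric.mem_ball] at hxi ⊢
      have : dist y i ≤ dist y x + dist x i := dist_triangle _ _ _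
      rw [dist_comm y x] at this
      linarith
    have := lipschitzOnWith_iff_dist_le_mul.1 (hK i) x hxball y hyball
    have hKi : (K i : ℝ) ≤ C := le_trans (Finset.le_sup' (fun x => (K x : ℝ)) hiJ) (le_max_left _ _)
    calc dist (f x) (f y) ≤ (K i : ℝ) * dist x y := this
      _ ≤ C * dist x y := by
          apply mul_le_mul_of_nonneg_right hKi dist_nonneg
  · have h1 : dist (f x) (f y) ≤ 2 * M := by
      calc dist (f x) (f y) ≤ ‖f x‖ + ‖f y‖ := dist_le_norm_add_norm _ _
        _ ≤ 2 * M := by linarith [hM x hx, hM y hy]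
    have h2 : 2 * M / δ * δ ≤ 2 * M / δ * dist x y :=
      mul_le_mul_of_nonneg_left hd (by positivity)
    have h3 : 2 * M / δ * δ = 2 * M := by field_simp
    calc dist (f x) (f y) ≤ 2 * M := h1
      _ = 2 * M / δ * δ := h3.symm
      _ ≤ 2 * M / δ * dist x y := h2
      _ ≤ C * dist x y := mul_le_mul_of_nonneg_right (le_max_right _ _) dist_nonneg

noncomputable def uSeq (n : ℕ) : ℝ := 1 / ((n : ℝ) + 1)

lemma uSeq_pos (n : ℕ) : 0 < uSeq n := by
  unfold uSeq; positivity

lemma uSeq_tendsto : Tendsto uSeq atTop (𝓝 0) :=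
  tendsto_one_div_add_atTop_nhds_zero_nat

lemma seq_tendsto_ne (t : ℝ) : Tendsto (fun n => t + uSeq n) atTop (𝓝[≠] t) := by
  apply tendsto_nhdsWithin_of_tendsto_nhds_of_eventually_within
  · have : Tendsto (fun n : ℕ => t + uSeq n) atTop (𝓝 (t + 0)) :=
      Tendsto.const_add t uSeq_tendsto
    simpa using this
  · filter_upwards with n
    simp only [Set.mem_compl_iff, Set.mem_singleton_iff]
    have := uSeq_pos n
    intro h
    nlinarith [uSeq_pos n]

lemma slope_seq_tendsto {g : ℝ → ℝ} {t c : ℝ} (h : HasDerivAt g c t) :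
    Tendsto (fun n => (g (t + uSeq n) - g t) / uSeq n) atTop (𝓝 c) := by
  have h1 : Tendsto (slope g t) (𝓝[≠] t) (𝓝 c) := hasDerivAt_iff_tendsto_slope.1 h
  have h2 := h1.comp (seq_tendsto_ne t)
  convert h2 using 2 with n
  rw [Function.comp_apply, slope_def_field]
  congr 1
  ring

lemma key {K : ℝ≥0} {f : ℝ → ℝ} (hf : LipschitzWith K f) {a b : ℝ} (hab : a ≤ b)
    (hd : ∀ᵐ x ∂(volume.restrict (Set.Ioo a b)),
      DifferentiableAt ℝ f x ∧ deriv f x ≤ 0) : f b ≤ f a := by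
  rcases eq_or_lt_of_le hab with rfl | hab'
  · exact le_refl _
  set q : ℕ → ℝ → ℝ := fun n x => (f (x + uSeq n) - f x) / uSeq n with hq
  set F : ℝ → ℝ := fun t => ∫ x in (0:ℝ)..t, f x with hF
  have hcont : Continuous f := hf.continuous
  have hFd : ∀ t, HasDerivAt F (f t) t := fun t =>
    (hcont.integral_hasStrictDerivAt 0 t).hasDerivAt
  have hint : ∀ p q : ℝ, IntervalIntegrable f volume p q := fun p q =>
    hcont.intervalIntegrable p q
  have hFint : ∀ p q : ℝ, ∫ x in p..q, f x = F q - F p := by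
    intro p q
    rw [hF]
    simp only []
    rw [← intervalIntegral.integral_add_adjacent_intervals (hint 0 p) (hint p q)]
    ring
  have hqcont : ∀ n, Continuous (q n) := by
    intro n
    apply Continuous.div_const
    exact (hcont.comp (continuous_id.add continuous_const)).sub hcont
  have step2 : ∀ n, ∫ x in a..b, q n x
      = ((F (b + uSeq n) - F b) - (F (a + uSeq n) - F a)) / uSeq n := by
    intro n
    have h1 : ∫ x in a..b, q n x
        = ((∫ x in a..b, f (x + uSeq n)) - ∫ x in a..b, f x) / uSeq n := by
      have hint2 : IntervalIntegrable (fun x => f (x + uSeq n)) volume a b :=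
        Continuous.intervalIntegrable (by fun_prop) a b
      rw [hq]
      simp only []
      rw [intervalIntegral.integral_div, intervalIntegral.integral_sub hint2 (hint a b)]
    rw [h1, intervalIntegral.integral_comp_add_right f (uSeq n), hFint, hFint]
    ring
  have step3 : Tendsto (fun n => ∫ x in a..b, q n x) atTop (𝓝 (f b - f a)) := by
    have hb := slope_seq_tendsto (hFd b)
    have ha := slope_seq_tendsto (hFd a)
    have hsub := hb.sub ha
    refine hsub.congr fun n => ?_
    rw [step2 n]; ring
  have step4 : ∀ n, ∫ x in a..b, q n x = ∫ x in Ioo a b, q n x := by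
    intro n
    rw [intervalIntegral.integral_of_le hab, integral_Ioc_eq_integral_Ioo]
  have hK' : ∀ n x, ‖q n x‖ ≤ (K : ℝ) := by
    intro n x
    rw [hq]
    simp only [norm_div, Real.norm_eq_abs]
    rw [abs_of_pos (uSeq_pos n), div_le_iff₀ (uSeq_pos n)]
    have hd2 := hf.dist_le_mul (x + uSeq n) x
    rw [Real.dist_eq, Real.dist_eq] at hd2
    calc |f (x + uSeq n) - f x| ≤ (K : ℝ) * |x + uSeq n - x| := hd2
      _ = (K : ℝ) * uSeq n := by
          rw [show x + uSeq n - x = uSeq n by ring, abs_of_pos (uSeq_pos n)]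
  have step5 : Tendsto (fun n => ∫ x in Ioo a b, q n x) atTop
      (𝓝 (∫ x in Ioo a b, deriv f x)) := by
    apply tendsto_integral_of_dominated_convergence (fun _ => (K : ℝ))
    · intro n
      exact (hqcont n).aestronglyMeasurable
    · exact integrableOn_const measure_Ioo_lt_top.ne
    · intro n
      filter_upwards with x using hK' n x
    · filter_upwards [hd] with x hx
      exact slope_seq_tendsto hx.1.hasDerivAt
  have step6 : ∫ x in Ioo a b, deriv f x ≤ 0 := by
    apply integral_nonpos_of_ae
    filter_upwards [hd] with x hx using hx.2
  have heq : f b - f a = ∫ x in Ioo a b, deriv f x := by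
    apply tendsto_nhds_unique _ step5
    exact step3.congr step4
  linarith

lemma arctan_lip : LipschitzWith 1 Real.arctan := by
  apply lipschitzWith_of_nnnorm_deriv_le Real.differentiable_arctan
  intro x
  have h : ‖deriv Real.arctan x‖ ≤ 1 := by
    rw [Real.deriv_arctan]
    simp only [Real.norm_eq_abs]
    rw [abs_of_pos (by positivity), div_le_one (by positivity)]
    nlinarith [sq_nonneg x]
  exact_mod_cast h

lemma mono_aux (R : ℝ) (l : ℝ → ℝ) (hlip : LocallyLipschitz l)
    (hae : ∀ᵐ s ∂(volume.restrict (Set.Ico 0 R)), DifferentiableAt ℝ l s)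
    (hineq : ∀ s ∈ Set.Ico (0 : ℝ) R, DifferentiableAt ℝ l s →
      deriv l s + (l s) ^ 2 ≤ -1) :
    ∀ s ∈ Set.Ico (0 : ℝ) R, Real.arctan (l s) + s ≤ Real.arctan (l 0) := by
  rintro s ⟨hs0, hsR⟩
  obtain ⟨K0, hK0⟩ := locLip_compact hlip (isCompact_Icc (a := 0) (b := s))
  obtain ⟨g, hg, hEq⟩ := hK0.extend_real
  have hFlip : LipschitzWith (1 * K0 + 1) (fun t => Real.arctan (g t) + t) := by
    have h1 : LipschitzWith (1 * K0) (fun t => Real.arctan (g t)) := arctan_lip.comp hg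
    exact h1.add LipschitzWith.id
  have hae' : ∀ᵐ x ∂(volume.restrict (Set.Ioo 0 s)),
      DifferentiableAt ℝ (fun t => Real.arctan (g t) + t) x ∧
      deriv (fun t => Real.arctan (g t) + t) x ≤ 0 := by
    have h1 : ∀ᵐ x ∂(volume.restrict (Set.Ioo 0 s)), DifferentiableAt ℝ l x :=
      ae_restrict_of_ae_restrict_of_subset
        (fun x (hx : x ∈ Set.Ioo (0:ℝ) s) =>
          (⟨le_of_lt hx.1, lt_trans hx.2 hsR⟩ : x ∈ Set.Ico (0:ℝ) R)) hae
    filter_upwards [h1, ae_restrict_mem measurableSet_Ioo] with x hdl hx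
    have hmem : Set.Icc (0:ℝ) s ∈ 𝓝 x := Icc_mem_nhds hx.1 hx.2
    have hlg : l =ᶠ[𝓝 x] g := Filter.eventuallyEq_of_mem hmem hEq
    have hdg : DifferentiableAt ℝ g x := (hlg.differentiableAt_iff).1 hdl
    have hderiv_eq : deriv l x = deriv g x := hlg.deriv_eq
    have hz : (0:ℝ) < 1 + g x ^ 2 := by positivity
    have hD : HasDerivAt (fun t => Real.arctan (g t) + t)
        (1 / (1 + g x ^ 2) * deriv g x + 1) x := by
      have h2 := (Real.hasDerivAt_arctan (g x)).comp x hdg.hasDerivAt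
      exact h2.add (hasDerivAt_id x)
    refine ⟨hD.differentiableAt, ?_⟩
    rw [hD.deriv]
    have hgl : g x = l x := (hEq ⟨le_of_lt hx.1, le_of_lt hx.2⟩).symm
    have hb : deriv g x ≤ -(1 + g x ^ 2) := by
      have h3 := hineq x ⟨le_of_lt hx.1, lt_trans hx.2 hsR⟩ hdl
      rw [← hderiv_eq, hgl]
      nlinarith [h3]
    have h2 : 1 / (1 + g x ^ 2) * deriv g x ≤ 1 / (1 + g x ^ 2) * (-(1 + g x ^ 2)) :=
      mul_le_mul_of_nonneg_left hb (by positivity)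
    have h3 : 1 / (1 + g x ^ 2) * (-(1 + g x ^ 2)) = -1 := by field_simp
    linarith
  have hkey := key hFlip hs0 hae'
  have h0 : g 0 = l 0 := (hEq ⟨le_refl 0, hs0⟩).symm
  have hs' : g s = l s := (hEq ⟨hs0, le_refl s⟩).symm
  simp only [h0, hs'] at hkey
  linarith

end helpers

theorem stmt_6 (R : ℝ) (hR : 0 < R) (l : ℝ → ℝ)
    (hlip : LocallyLipschitz l)
    (hae : ∀ᵐ s ∂(volume.restrict (Set.Ico 0 R)), DifferentiableAt ℝ l s)
    (hineq : ∀ s ∈ Set.Ico (0 : ℝ) R, DifferentiableAt ℝ l s →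
      deriv l s + (l s) ^ 2 ≤ -1) :
    (∀ s ∈ Set.Ico (0 : ℝ) R, 1 + l 0 * Real.tan s > 0 →
      l s ≤ (l 0 - Real.tan s) / (1 + l 0 * Real.tan s)) ∧
    R ≤ π / 2 + Real.arctan (l 0) := by
  have mono := mono_aux R l hlip hae hineq
  constructor
  · rintro s hs hpos
    have hmono := mono s hs
    set a := Real.arctan (l 0) with ha
    have ha1 : a < π / 2 := Real.arctan_lt_pi_div_two _
    have ha0 : -(π / 2) < a := Real.neg_pi_div_two_lt_arctan _
    have ha2 : -(π / 2) < Real.arctan (l s) := Real.neg_pi_div_two_lt_arctan _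
    have ha3 : Real.arctan (l s) < π / 2 := Real.arctan_lt_pi_div_two _
    have hlt : -(π / 2) < a - s := by linarith
    have hlt2 : a - s < π / 2 := by have := hs.1; linarith
    have hls : l s ≤ Real.tan (a - s) := by
      have h4 : Real.arctan (l s) ≤ a - s := by linarith
      have := Real.strictMonoOn_tan.monotoneOn ⟨ha2, ha3⟩ ⟨hlt, hlt2⟩ h4
      rwa [Real.tan_arctan] at this
    rcases eq_or_ne (Real.cos s) 0 with hcs | hcs
    · -- s = π / 2
      have hspi : s = π / 2 := by
        obtain ⟨n, hn⟩ := Real.cos_eq_zero_iff.1 hcs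
        have hpi := Real.pi_pos
        have hx1 : (0:ℝ) ≤ (2 * (n:ℝ) + 1) * π / 2 := hn ▸ hs.1
        have hsπ : s < π := by linarith
        have hx2 : (2 * (n:ℝ) + 1) * π / 2 < π := hn ▸ hsπ
        have h1 : (0:ℝ) ≤ 2 * (n:ℝ) + 1 := by nlinarith
        have h2 : 2 * (n:ℝ) + 1 < 2 := by nlinarith
        have hn0 : n = 0 := by
          have i1 : (0:ℤ) ≤ 2 * n + 1 := by exact_mod_cast h1
          have i2 : (2 * n + 1 : ℤ) < 2 := by exact_mod_cast h2
          omega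
        rw [hn0] at hn
        push_cast at hn
        linarith
      subst hspi
      have hapos : 0 < a := by linarith
      have htan_neg : Real.tan (a - π / 2) < 0 := by
        apply Real.tan_neg_of_neg_of_pi_div_two_lt
        · linarith
        · exact hlt
      have hl0 : 0 < l 0 := by
        have := Real.tan_pos_of_pos_of_lt_pi_div_two hapos ha1
        rwa [ha, Real.tan_arctan] at this
      rw [Real.tan_pi_div_two]
      simp only [sub_zero, mul_zero, add_zero, div_one]
      linarith
    · have hca : Real.cos a ≠ 0 := ne_of_gt (Real.cos_pos_of_mem_Ioo ⟨ha0, ha1⟩)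
      have hcas : Real.cos (a - s) ≠ 0 := ne_of_gt (Real.cos_pos_of_mem_Ioo ⟨hlt, hlt2⟩)
      have htana : Real.tan a = l 0 := Real.tan_arctan _
      have key_eq : Real.tan (a - s) = (l 0 - Real.tan s) / (1 + l 0 * Real.tan s) := by
        rw [← htana]
        have hden : Real.cos a * Real.cos s + Real.sin a * Real.sin s ≠ 0 := by
          rw [← Real.cos_sub]; exact hcas
        rw [Real.tan_eq_sin_div_cos, Real.tan_eq_sin_div_cos, Real.tan_eq_sin_div_cos,
          Real.sin_sub, Real.cos_sub]
        field_simp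
      rw [← key_eq]
      exact hls
  · by_contra h
    push_neg at h
    have hc0 : 0 < π / 2 + Real.arctan (l 0) := by
      linarith [Real.neg_pi_div_two_lt_arctan (l 0)]
    have h1 := mono (π / 2 + Real.arctan (l 0)) ⟨le_of_lt hc0, h⟩
    linarith [Real.neg_pi_div_two_lt_arctan (l (π / 2 + Real.arctan (l 0)))]
end

section
/- If $\mu : [0, \frac{\pi}{4}) \to \mathbb{R}$ is locally Lipschitz with $\mu(0) = 1$ and satisfies $\mu'(s) + \mu(s)^2 \le -1$ at almost every point, then $\mu(s) \le \tan\left(\frac{\pi}{4} - s\right)$ for all $s \in [0, \frac{\pi}{4})$. -/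
open Real MeasureTheory
open scoped NNReal ENNReal Topology

/-- A Lipschitz function whose derivative is a.e. nonpositive on `Ioc a b` is
nonincreasing from `a` to `b`. -/
lemma key_mono {f : ℝ → ℝ} {C : ℝ≥0} (hf : LipschitzWith C f) {a b : ℝ} (hab : a ≤ b)
    (h : ∀ᵐ x ∂(volume.restrict (Set.Ioc a b)), DifferentiableAt ℝ f x ∧ deriv f x ≤ 0) :
    f b ≤ f a := by
  set g : ℝ → ℝ := fun x => (C : ℝ) * x - f x with hg
  have hg_mono : Monotone g := by
    intro x y hxy
    have h1 := hf.dist_le_mul y x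
    rw [Real.dist_eq, Real.dist_eq] at h1
    have h2 : f y - f x ≤ (C:ℝ) * (y - x) := by
      calc f y - f x ≤ |f y - f x| := le_abs_self _
        _ ≤ (C:ℝ) * |y - x| := h1
        _ = (C:ℝ) * (y - x) := by rw [abs_of_nonneg (sub_nonneg.2 hxy)]
    simp only [g]
    linarith
  have hg_cont : Continuous g := (continuous_const.mul continuous_id).sub hf.continuous
  set F : StieltjesFunction ℝ := ⟨g, hg_mono, fun x => hg_cont.continuousAt.continuousWithinAt⟩
    with hF
  have hFd := F.ae_hasDerivAt
  set ρ : ℝ → ℝ≥0∞ := F.measure.rnDeriv volume with hρ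
  have hρm : AEMeasurable ρ (volume.restrict (Set.Ioc a b)) :=
    (Measure.measurable_rnDeriv _ _).aemeasurable
  have hIoc : MeasurableSet (Set.Ioc a b) := measurableSet_Ioc
  have hgab : 0 ≤ g b - g a := sub_nonneg.2 (hg_mono hab)
  have hlint : ∫⁻ x in Set.Ioc a b, ρ x ≤ ENNReal.ofReal (g b - g a) := by
    rw [← withDensity_apply _ hIoc]
    calc (volume.withDensity ρ) (Set.Ioc a b) ≤ F.measure (Set.Ioc a b) :=
          Measure.withDensity_rnDeriv_le F.measure volume _
      _ = ENNReal.ofReal (g b - g a) := F.measure_Ioc a b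
  have hlint_ne : ∫⁻ x in Set.Ioc a b, ρ x ≠ ⊤ :=
    ne_top_of_le_ne_top ENNReal.ofReal_ne_top hlint
  have hint : IntegrableOn (fun x => (ρ x).toReal) (Set.Ioc a b) :=
    integrable_toReal_of_lintegral_ne_top hρm hlint_ne
  have h0 : ∀ᵐ x ∂(volume.restrict (Set.Ioc a b)), (C:ℝ) ≤ (ρ x).toReal := by
    filter_upwards [h, ae_restrict_of_ae hFd] with x hx hdx
    have hfd : HasDerivAt f ((C:ℝ) * 1 - (ρ x).toReal) x := by
      have h1 : HasDerivAt (fun y => (C:ℝ) * y - g y) ((C:ℝ) * 1 - (ρ x).toReal) x :=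
        ((hasDerivAt_id x).const_mul (C:ℝ)).sub hdx
      have h2 : (fun y => (C:ℝ) * y - g y) = f := by funext y; simp [g]
      rwa [h2] at h1
    have h3 := hx.2
    rw [hfd.deriv] at h3
    linarith
  have hlow : (C:ℝ) * (b - a) ≤ ∫ x in Set.Ioc a b, (ρ x).toReal := by
    have hconst : IntegrableOn (fun _ => (C:ℝ)) (Set.Ioc a b) := by
      apply (integrableOn_const_iff (C := (C:ℝ))).2 (Or.inr _)
      rw [Real.volume_Ioc]; exact ENNReal.ofReal_lt_top
    have hmono := setIntegral_mono_ae_restrict hconst hint h0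
    rwa [setIntegral_const, measureReal_def, Real.volume_Ioc, ENNReal.toReal_ofReal (sub_nonneg.2 hab),
      smul_eq_mul, mul_comm] at hmono
  have hup : ∫ x in Set.Ioc a b, (ρ x).toReal ≤ g b - g a := by
    rw [integral_toReal hρm (ae_restrict_of_ae (Measure.rnDeriv_lt_top _ _))]
    exact ENNReal.toReal_le_of_le_ofReal hgab hlint
  have hfin : (C:ℝ) * (b - a) ≤ g b - g a := hlow.trans hup
  simp only [g] at hfin
  linarith

theorem stmt_8 (μ : ℝ → ℝ)
    (hlip : LocallyLipschitz μ)
    (h0 : μ 0 = 1)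
    (hae : ∀ᵐ s ∂(volume.restrict (Set.Ico 0 (π / 4))),
      DifferentiableAt ℝ μ s ∧ deriv μ s + (μ s) ^ 2 ≤ -1) :
    ∀ s ∈ Set.Ico (0 : ℝ) (π / 4), μ s ≤ Real.tan (π / 4 - s) := by
  have harc : LipschitzWith 1 Real.arctan := by
    apply lipschitzWith_of_nnnorm_deriv_le Real.differentiable_arctan
    intro x
    rw [Real.deriv_arctan]
    rw [← NNReal.coe_le_coe, coe_nnnorm, Real.norm_eq_abs, NNReal.coe_one]
    have h1 : (0:ℝ) < 1 + x^2 := by positivity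
    rw [abs_of_nonneg (by positivity), div_le_one h1]
    nlinarith [sq_nonneg x]
  set f : ℝ → ℝ := fun x => Real.arctan (μ x) + x with hfdef
  have hf_cont : Continuous f := (Real.continuous_arctan.comp hlip.continuous).add continuous_id
  have hf0 : f 0 = π/4 := by simp [f, h0, Real.arctan_one]
  have hfae : ∀ᵐ x ∂(volume.restrict (Set.Ico 0 (π/4))),
      DifferentiableAt ℝ f x ∧ deriv f x ≤ 0 := by
    filter_upwards [hae] with x hx
    obtain ⟨hdiff, hineq⟩ := hx
    have hp : (0:ℝ) < 1 + μ x ^ 2 := by positivity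
    have hd : HasDerivAt f (1 / (1 + μ x ^ 2) * deriv μ x + 1) x :=
      (hdiff.hasDerivAt.arctan).add (hasDerivAt_id x)
    refine ⟨hd.differentiableAt, ?_⟩
    rw [hd.deriv]
    have h2 : deriv μ x ≤ -1 - μ x ^ 2 := by linarith
    have h3 : 1 / (1 + μ x ^ 2) * deriv μ x ≤ 1 / (1 + μ x ^ 2) * (-1 - μ x ^ 2) :=
      mul_le_mul_of_nonneg_left h2 (le_of_lt (by positivity))
    have h4 : 1 / (1 + μ x ^ 2) * (-1 - μ x ^ 2) = -1 := by field_simp; ring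
    linarith
  intro s hs
  obtain ⟨hs0, hs4⟩ := hs
  have key : Set.Icc (0:ℝ) s ⊆ {t | f t ≤ π/4} := by
    apply IsClosed.Icc_subset_of_forall_exists_gt
    · exact (isClosed_le hf_cont continuous_const).inter isClosed_Icc
    · show f 0 ≤ π/4
      rw [hf0]
    · rintro t ⟨htf, ht0, hts⟩ y hy
      obtain ⟨K, u, hu, hK⟩ := hlip t
      obtain ⟨ε, hε, hball⟩ := Metric.mem_nhds_iff.1 hu
      set v := Set.Icc (t - ε/2) (t + ε/2) with hv
      have hvu : v ⊆ u := by
        intro z hz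
        apply hball
        rw [Metric.mem_ball, Real.dist_eq]
        rcases hz with ⟨h1, h2⟩
        rw [abs_sub_lt_iff]; constructor <;> linarith
      have hfK : LipschitzOnWith (K + 1) f v := by
        apply LipschitzOnWith.of_dist_le_mul
        intro z hz w hw
        have h1 := (harc.comp_lipschitzOnWith (hK.mono hvu)).dist_le_mul z hz w hw
        calc dist (f z) (f w) ≤ dist (Real.arctan (μ z)) (Real.arctan (μ w)) + dist z w := by
              simp only [f, Real.dist_eq]
              rw [show Real.arctan (μ z) + z - (Real.arctan (μ w) + w)
                  = (Real.arctan (μ z) - Real.arctan (μ w)) + (z - w) by ring]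
              exact abs_add_le _ _
          _ ≤ ((1 * K : ℝ≥0) : ℝ) * dist z w + dist z w := add_le_add_left h1 _
          _ ≤ ((K + 1 : ℝ≥0) : ℝ) * dist z w := by
              push_cast
              have hd := dist_nonneg (x := z) (y := w)
              nlinarith
      obtain ⟨g, hgl, hgeq⟩ := hfK.extend_real
      set w := min y (min (t + ε/4) s) with hwdef
      have htw : t < w := lt_min hy (lt_min (by linarith) hts)
      have hw_le_s : w ≤ s := le_trans (min_le_right y _) (min_le_right _ _)
      have hw_eps : w ≤ t + ε/4 := le_trans (min_le_right y _) (min_le_left _ _)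
      have hae2 : ∀ᵐ x ∂(volume.restrict (Set.Ioc t w)),
          DifferentiableAt ℝ g x ∧ deriv g x ≤ 0 := by
        have hsub : Set.Ioc t w ⊆ Set.Ico 0 (π/4) := by
          intro x hx
          exact ⟨le_trans ht0 hx.1.le, lt_of_le_of_lt (hx.2.trans hw_le_s) hs4⟩
        filter_upwards [ae_restrict_of_ae_restrict_of_subset hsub hfae,
          ae_restrict_mem measurableSet_Ioc] with x hx hxm
        have hnb : v ∈ 𝓝 x := by
          apply Icc_mem_nhds
          · have := hxm.1; linarith
          · have h5 := hxm.2; have h6 := hw_eps; linarith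
        have heq : g =ᶠ[𝓝 x] f := Filter.eventuallyEq_of_mem hnb (fun z hz => (hgeq hz).symm)
        constructor
        · exact (Filter.EventuallyEq.differentiableAt_iff heq).2 hx.1
        · rw [heq.deriv_eq]; exact hx.2
      have hmono := key_mono hgl (le_of_lt htw) hae2
      have hgt' : g t = f t := (hgeq ⟨by linarith, by linarith⟩).symm
      have hgw : g w = f w := (hgeq ⟨by linarith, by linarith⟩).symm
      refine ⟨w, ?_, htw, min_le_left _ _⟩
      show f w ≤ π/4
      rw [← hgw]
      calc g w ≤ g t := hmono
        _ = f t := hgt'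
        _ ≤ π/4 := htf
  have hkey : f s ≤ π/4 := key ⟨hs0, le_refl s⟩
  have h1 : Real.arctan (μ s) ≤ π/4 - s := by
    have : Real.arctan (μ s) + s ≤ π/4 := hkey
    linarith
  have h2 : μ s = Real.tan (Real.arctan (μ s)) := (Real.tan_arctan _).symm
  rw [h2]
  have hmem1 : Real.arctan (μ s) ∈ Set.Ioo (-(π/2)) (π/2) :=
    ⟨Real.neg_pi_div_two_lt_arctan _, Real.arctan_lt_pi_div_two _⟩
  have hmem2 : π/4 - s ∈ Set.Ioo (-(π/2)) (π/2) := by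
    constructor
    · have := Real.pi_pos; linarith
    · linarith [Real.pi_pos]
  exact Real.strictMonoOn_tan.monotoneOn hmem1 hmem2 h1
end
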